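/- (Maximality of the outer factor pointwise in the disk.) Let F and G be bounded analytic operator-valued functions on the unit disk with F outer (in the sense that S(T_F* T_F; {0}) = F_0* F_0) and with F(z)*F(z) = G(z)*G(z) a.e. on the unit circle. Then for every z in the open unit disk, G(z)* G(z) ≤ F(z)* F(z). -/

import Mathlib

open scoped InnerProductSpace
open ContinuousLinearMap
open scoped ENNReal

set_option linter.unusedSectionVars false
set_option maxHeartbeats 1000000

section

variable {H K L : Type*} [NormedAddCommGroup H] [InnerProductSpace ℂ H] [CompleteSpace H]
  [NormedAddCommGroup K] [InnerProductSpace ℂ K] [CompleteSpace K]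
  [NormedAddCommGroup L] [InnerProductSpace ℂ L] [CompleteSpace L]

/-- `T` is the (bounded) lower triangular block Toeplitz operator
`T_F = (F_{i-j})_{i,j≥0} : ℓ²_H → ℓ²_K` with symbol coefficients `F_j`; boundedness of
`T` encodes that `F ∈ H^∞_{L(H,K)}(𝔻)`. -/
def IsToeplitzOf (F : ℕ → H →L[ℂ] K)
    (T : lp (fun _ : ℕ => H) 2 →L[ℂ] lp (fun _ : ℕ => K) 2) : Prop :=
  ∀ (v : lp (fun _ : ℕ => H) 2) (i : ℕ),
    T v i = ∑ j ∈ Finset.range (i + 1), F (i - j) (v j)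

/-- The quadratic form of a block matrix supported on `{0,…,k} × {0,…,k}`. -/
noncomputable def schurQF (k : ℕ) (S : ℕ → ℕ → H →L[ℂ] H) (v : ℕ → H) : ℝ :=
  ∑ i ∈ Finset.range (k + 1), ∑ j ∈ Finset.range (k + 1), (⟪S i j (v j), v i⟫_ℂ).re

/-- `S` is the Schur complement of `T* T` supported on rows and columns `{0,…,k}`:
the maximal positive operator matrix supported there with `T* T - S ≥ 0`. -/
def IsSchurOfTT (T : lp (fun _ : ℕ => H) 2 →L[ℂ] lp (fun _ : ℕ => K) 2) (k : ℕ)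
    (S : ℕ → ℕ → H →L[ℂ] H) : Prop :=
  (∀ i j, k < i ∨ k < j → S i j = 0) ∧ (∀ i j, (S i j).adjoint = S j i) ∧
    (∀ v, 0 ≤ schurQF k S v) ∧
    (∀ v : lp (fun _ : ℕ => H) 2, schurQF k S (fun n => v n) ≤ ‖T v‖ ^ 2) ∧
    ∀ X : ℕ → ℕ → H →L[ℂ] H, (∀ i j, k < i ∨ k < j → X i j = 0) →
      (∀ i j, (X i j).adjoint = X j i) → (∀ v, 0 ≤ schurQF k X v) →
      (∀ v : lp (fun _ : ℕ => H) 2, schurQF k X (fun n => v n) ≤ ‖T v‖ ^ 2) →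
      ∀ v, schurQF k X v ≤ schurQF k S v

end

section Infra

variable {E : Type*} [NormedAddCommGroup E] [InnerProductSpace ℂ E]

private lemma rpow2 : ∀ x : ℝ, x ^ (2:ℝ) = x ^ (2:ℕ) := fun x => by
  rw [← Real.rpow_natCast]; norm_num

lemma meml2 (f : ℕ → E) (h : Summable fun n => ‖f n‖ ^ 2) : Memℓp f 2 := by
  apply memℓp_gen
  have h2 : (2 : ℝ≥0∞).toReal = (2:ℝ) := by norm_num
  rw [h2]; simpa [rpow2] using h

lemma norm_sq_l2 (f : lp (fun _ : ℕ => E) 2) : ‖f‖ ^ 2 = ∑' i, ‖f i‖ ^ 2 := by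
  have h := lp.norm_rpow_eq_tsum (p := 2) (by norm_num) f
  have h2 : ((2:ℝ≥0∞)).toReal = (2:ℝ) := by norm_num
  rw [h2] at h; simp only [rpow2] at h; exact h

lemma summable_sq (f : lp (fun _ : ℕ => E) 2) : Summable fun n => ‖f n‖ ^ 2 := by
  have h := lp.hasSum_norm (p := 2) (by norm_num) f
  have h2 : ((2:ℝ≥0∞)).toReal = (2:ℝ) := by norm_num
  rw [h2] at h; simp only [rpow2] at h; exact h.summable

lemma norm_eq_of_sq_eq {a b : ℝ} (ha : 0 ≤ a) (hb : 0 ≤ b) (h : a ^ 2 = b ^ 2) : a = b := by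
  nlinarith

/-- single at 0 as a CLM -/
noncomputable def singCLM : E →L[ℂ] lp (fun _ : ℕ => E) 2 :=
  LinearMap.mkContinuous
    { toFun := fun x => lp.single 2 0 x
      map_add' := fun x y => by
        apply lp.ext; funext j
        by_cases hj : j = 0 <;>
          simp [lp.single_apply, hj]
      map_smul' := fun c x => by
        simpa using lp.single_smul (𝕜 := ℂ) 2 (0:ℕ) (E := fun _ : ℕ => E) x c }
    1 (by
      intro x
      simpa using (lp.norm_single (E := fun _ : ℕ => E) (p := 2) (by norm_num)
        (fun _ => x) 0).le)

@[simp] lemma singCLM_apply_zero (x : E) : (singCLM x : ℕ → E) 0 = x := by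
  simp [singCLM, lp.single_apply]

@[simp] lemma singCLM_apply_succ (x : E) (n : ℕ) : (singCLM x : ℕ → E) (n+1) = 0 := by
  simp [singCLM, lp.single_apply]

lemma norm_singCLM (x : E) : ‖(singCLM x : lp (fun _ : ℕ => E) 2)‖ = ‖x‖ := by
  simpa [singCLM] using lp.norm_single (E := fun _ : ℕ => E) (p := 2) (by norm_num) 0 x

-- underlying shift function
def shf (f : ℕ → E) : ℕ → E := fun n => match n with | 0 => 0 | (k+1) => f k

lemma shf_summable {f : ℕ → E} (h : Summable fun n => ‖f n‖ ^ 2) :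
    Summable fun n => ‖shf f n‖ ^ 2 := by
  rw [← summable_nat_add_iff 1]
  simpa [shf] using h

lemma shf_memlp (f : lp (fun _ : ℕ => E) 2) : Memℓp (shf (f : ℕ → E)) 2 :=
  meml2 _ (shf_summable (summable_sq f))

lemma tsum_shf_sq (f : lp (fun _ : ℕ => E) 2) :
    ∑' n, ‖shf (f : ℕ → E) n‖ ^ 2 = ∑' n, ‖f n‖ ^ 2 := by
  rw [Summable.tsum_eq_zero_add (shf_summable (summable_sq f))]
  simp [shf]

noncomputable def shiftCLM : lp (fun _ : ℕ => E) 2 →L[ℂ] lp (fun _ : ℕ => E) 2 :=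
  LinearMap.mkContinuous
    { toFun := fun f => ⟨shf (f : ℕ → E), shf_memlp f⟩
      map_add' := fun f g => by
        apply lp.ext; funext n
        change shf (⇑(f + g)) n = shf (⇑f) n + shf (⇑g) n
        cases n <;> simp [shf, lp.coeFn_add, PreLp.add_apply]
      map_smul' := fun c f => by
        apply lp.ext; funext n
        cases n <;> simp [shf, lp.coeFn_smul] }
    1 (by
      intro f
      rw [one_mul]
      show ‖(⟨shf (f : ℕ → E), shf_memlp f⟩ : lp (fun _ : ℕ => E) 2)‖ ≤ ‖f‖
      refine (norm_eq_of_sq_eq (norm_nonneg _) (norm_nonneg _) ?_).le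
      rw [norm_sq_l2, norm_sq_l2]
      exact tsum_shf_sq f)

@[simp] lemma shiftCLM_apply_zero (f : lp (fun _ : ℕ => E) 2) :
    (shiftCLM f : ℕ → E) 0 = 0 := rfl

@[simp] lemma shiftCLM_apply_succ (f : lp (fun _ : ℕ => E) 2) (n : ℕ) :
    (shiftCLM f : ℕ → E) (n+1) = f n := rfl

-- tail
lemma tail_summable {f : ℕ → E} (h : Summable fun n => ‖f n‖ ^ 2) :
    Summable fun n => ‖f (n+1)‖ ^ 2 := by
  have := (summable_nat_add_iff (f := fun n => ‖f n‖ ^ 2) 1).2 h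
  simpa using this

noncomputable def tailCLM : lp (fun _ : ℕ => E) 2 →L[ℂ] lp (fun _ : ℕ => E) 2 :=
  LinearMap.mkContinuous
    { toFun := fun f => ⟨fun n => f (n+1), meml2 _ (tail_summable (summable_sq f))⟩
      map_add' := fun f g => by apply lp.ext; funext n; exact congrFun (lp.coeFn_add f g) (n+1)
      map_smul' := fun c f => by apply lp.ext; funext n; simp [lp.coeFn_smul] }
    1 (by
      intro f
      rw [one_mul]
      show ‖(⟨fun n => f (n+1), meml2 _ (tail_summable (summable_sq f))⟩ :
          lp (fun _ : ℕ => E) 2)‖ ≤ ‖f‖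
      have h1 : ‖(⟨fun n => f (n+1), meml2 _ (tail_summable (summable_sq f))⟩ :
          lp (fun _ : ℕ => E) 2)‖ ^ 2 = ∑' n, ‖(f : ℕ → E) (n+1)‖ ^ 2 := norm_sq_l2 _
      have h2 : ‖f‖^2 = ∑' n, ‖(f : ℕ → E) n‖ ^ 2 := norm_sq_l2 f
      have h3 : ∑' n, ‖(f : ℕ → E) (n+1)‖ ^ 2 ≤ ∑' n, ‖(f : ℕ → E) n‖ ^ 2 := by
        rw [Summable.tsum_eq_zero_add (summable_sq f)]
        have : (0:ℝ) ≤ ‖(f : ℕ → E) 0‖ ^ 2 := sq_nonneg _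
        linarith
      nlinarith [norm_nonneg (⟨fun n => f (n+1), meml2 _ (tail_summable (summable_sq f))⟩ :
          lp (fun _ : ℕ => E) 2), norm_nonneg f])

@[simp] lemma tailCLM_apply (f : lp (fun _ : ℕ => E) 2) (n : ℕ) :
    (tailCLM f : ℕ → E) n = f (n+1) := rfl

lemma inner_tail_left (f g : lp (fun _ : ℕ => E) 2) :
    ⟪tailCLM f, g⟫_ℂ = ⟪f, shiftCLM g⟫_ℂ := by
  rw [lp.inner_eq_tsum, lp.inner_eq_tsum]
  rw [Summable.tsum_eq_zero_add (lp.summable_inner (𝕜 := ℂ) f (shiftCLM g))]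
  simp

lemma lp_decomp (f : lp (fun _ : ℕ => E) 2) :
    f = singCLM ((f : ℕ → E) 0) + shiftCLM (tailCLM f) := by
  apply lp.ext; funext n
  cases n <;> simp [lp.coeFn_add]

lemma tail_sing_add_shift (a : E) (w : lp (fun _ : ℕ => E) 2) :
    tailCLM (singCLM a + shiftCLM w) = w := by
  apply lp.ext; funext n
  simp [lp.coeFn_add]

lemma norm_sq_sing_add_shift (a : E) (w : lp (fun _ : ℕ => E) 2) :
    ‖singCLM a + shiftCLM w‖ ^ 2 = ‖a‖^2 + ‖w‖^2 := by
  rw [norm_sq_l2, Summable.tsum_eq_zero_add (summable_sq _)]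
  congr 1
  · simp [lp.coeFn_add]
  · rw [norm_sq_l2]
    apply tsum_congr
    intro n
    simp [lp.coeFn_add]

-- kernel vector
lemma kern_summable {z : ℂ} (hz : ‖z‖ < 1) (y : E) :
    Summable fun n => ‖(star z) ^ n • y‖ ^ 2 := by
  have h : ∀ n : ℕ, ‖(star z) ^ n • y‖ ^ 2 = (‖z‖^2) ^ n * ‖y‖^2 := by
    intro n
    rw [norm_smul, norm_pow, norm_star]
    ring
  simp only [h]
  exact (summable_geometric_of_lt_one (by positivity)
    (by nlinarith [norm_nonneg z])).mul_right _

noncomputable def kern (z : ℂ) (hz : ‖z‖ < 1) (y : E) : lp (fun _ : ℕ => E) 2 :=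
  ⟨fun n => (star z) ^ n • y, meml2 _ (kern_summable hz y)⟩

@[simp] lemma kern_apply (z : ℂ) (hz : ‖z‖ < 1) (y : E) (n : ℕ) :
    (kern z hz y : ℕ → E) n = (star z) ^ n • y := rfl

lemma norm_sq_kern (z : ℂ) (hz : ‖z‖ < 1) (y : E) :
    ‖kern z hz y‖ ^ 2 = (∑' n : ℕ, (‖z‖^2) ^ n) * ‖y‖ ^ 2 := by
  rw [norm_sq_l2]
  have h : ∀ n : ℕ, ‖(kern z hz y : ℕ → E) n‖ ^ 2 = (‖z‖^2) ^ n * ‖y‖^2 := by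
    intro n
    rw [kern_apply, norm_smul, norm_pow, norm_star]
    ring
  simp only [h]
  exact tsum_mul_right

lemma tail_kern (z : ℂ) (hz : ‖z‖ < 1) (y : E) :
    tailCLM (kern z hz y) = (star z) • kern z hz y := by
  apply lp.ext; funext n
  rw [lp.coeFn_smul]
  simp [pow_succ, mul_smul, mul_comm]

lemma inner_kern_left (z : ℂ) (hz : ‖z‖ < 1) (y : E) (f : lp (fun _ : ℕ => E) 2) :
    ⟪kern z hz y, f⟫_ℂ = ∑' n : ℕ, z ^ n * ⟪y, f n⟫_ℂ := by
  rw [lp.inner_eq_tsum]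
  apply tsum_congr
  intro n
  rw [kern_apply, inner_smul_left]
  simp [map_pow]

end Infra

section

variable {H K L : Type*} [NormedAddCommGroup H] [InnerProductSpace ℂ H] [CompleteSpace H]
  [NormedAddCommGroup K] [InnerProductSpace ℂ K] [CompleteSpace K]
  [NormedAddCommGroup L] [InnerProductSpace ℂ L] [CompleteSpace L]

-- ===== auxiliary Toeplitz lemmas =====

lemma schurQF_zero (X : ℕ → ℕ → H →L[ℂ] H) (v : ℕ → H) :
    schurQF 0 X v = (⟪X 0 0 (v 0), v 0⟫_ℂ).re := by
  simp [schurQF]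

variable {F : ℕ → H →L[ℂ] K} {TF : lp (fun _ : ℕ => H) 2 →L[ℂ] lp (fun _ : ℕ => K) 2}

lemma T_sing_apply (hTF : IsToeplitzOf F TF) (x : H) (i : ℕ) :
    (TF (singCLM x) : ℕ → K) i = F i x := by
  rw [hTF]
  rw [Finset.sum_eq_single 0]
  · simp
  · intro j hj hj0
    obtain ⟨j', rfl⟩ := Nat.exists_eq_succ_of_ne_zero hj0
    simp
  · simp

lemma TF_shift (hTF : IsToeplitzOf F TF) (v : lp (fun _ : ℕ => H) 2) :
    TF (shiftCLM v) = shiftCLM (TF v) := by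
  apply lp.ext; funext i
  cases i with
  | zero => rw [hTF]; simp
  | succ i =>
    rw [hTF, shiftCLM_apply_succ, hTF, Finset.sum_range_succ']
    simp [Nat.succ_sub_succ]

lemma T_sing_decomp (hTF : IsToeplitzOf F TF) (x : H) :
    TF (singCLM x) = singCLM (F 0 x) + shiftCLM (tailCLM (TF (singCLM x))) := by
  conv_lhs => rw [lp_decomp (TF (singCLM x))]
  rw [T_sing_apply hTF]

lemma TF_decomp (hTF : IsToeplitzOf F TF) (v : lp (fun _ : ℕ => H) 2) :
    TF v = singCLM (F 0 ((v : ℕ → H) 0)) +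
      shiftCLM (tailCLM (TF (singCLM ((v : ℕ → H) 0))) + TF (tailCLM v)) := by
  have e := T_sing_decomp hTF ((v : ℕ → H) 0)
  conv_lhs => rw [lp_decomp v, map_add, TF_shift hTF, e]
  rw [map_add, add_assoc]

lemma tail_TF (hTF : IsToeplitzOf F TF) (v : lp (fun _ : ℕ => H) 2) :
    tailCLM (TF v) = tailCLM (TF (singCLM ((v : ℕ → H) 0))) + TF (tailCLM v) := by
  conv_lhs => rw [TF_decomp hTF v]
  rw [tail_sing_add_shift]

lemma coeff_norm_le (hTF : IsToeplitzOf F TF) (i : ℕ) (x : H) :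
    ‖F i x‖ ≤ ‖TF‖ * ‖x‖ := by
  rw [← T_sing_apply hTF x i]
  refine (lp.norm_apply_le_norm (by norm_num) (TF (singCLM x)) i).trans ?_
  calc ‖TF (singCLM x)‖ ≤ ‖TF‖ * ‖singCLM x‖ := TF.le_opNorm _
    _ = ‖TF‖ * ‖x‖ := by rw [norm_singCLM]

lemma summable_symbol (hTF : IsToeplitzOf F TF) {z : ℂ} (hz : ‖z‖ < 1) :
    Summable fun j : ℕ => z ^ j • F j := by
  apply Summable.of_norm_bounded (g := fun j => ‖z‖ ^ j * (‖TF‖ + 1))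
  · exact (summable_geometric_of_lt_one (norm_nonneg z) hz).mul_right _
  · intro j
    show ‖z ^ j • F j‖ ≤ ‖z‖ ^ j * (‖TF‖ + 1)
    have h1 : ‖F j‖ ≤ ‖TF‖ + 1 := by
      refine opNorm_le_bound (F j) (by positivity) fun x => ?_
      refine (coeff_norm_le hTF j x).trans ?_
      nlinarith [norm_nonneg x, norm_nonneg TF]
    have h2 : (0:ℝ) ≤ ‖z‖ ^ j := by positivity
    calc ‖z ^ j • F j‖ ≤ ‖z ^ j‖ * ‖F j‖ := opNorm_smul_le _ _
      _ = ‖z‖ ^ j * ‖F j‖ := by rw [norm_pow]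
      _ ≤ ‖z‖ ^ j * (‖TF‖ + 1) := by nlinarith [norm_nonneg (F j)]

lemma eval_kern (hTF : IsToeplitzOf F TF) {z : ℂ} (hz : ‖z‖ < 1) (x : H) (y : K) :
    ⟪kern z hz y, TF (singCLM x)⟫_ℂ = ⟪y, (∑' j : ℕ, z ^ j • F j) x⟫_ℂ := by
  rw [inner_kern_left]
  have hs : Summable fun j : ℕ => z ^ j • F j := summable_symbol hTF hz
  have h1 : (∑' j : ℕ, z ^ j • F j) x = ∑' j : ℕ, z ^ j • (F j x) := by
    have := (ContinuousLinearMap.apply ℂ K x).map_tsum hs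
    simpa using this
  rw [h1]
  have hs2 : Summable fun j : ℕ => z ^ j • (F j x) :=
    ((ContinuousLinearMap.apply ℂ K x).summable hs).congr (fun j => by simp)
  have h2 : ⟪y, ∑' j : ℕ, z ^ j • (F j x)⟫_ℂ = ∑' j : ℕ, z ^ j * ⟪y, F j x⟫_ℂ := by
    simpa using (innerSL ℂ y).map_tsum hs2
  rw [h2]
  apply tsum_congr
  intro n
  rw [T_sing_apply hTF]

-- ===== Step A : outerness implies backward-shift invariance =====

lemma stepA (hTF : IsToeplitzOf F TF)
    (houter : IsSchurOfTT TF 0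
      (fun i j => if i = 0 ∧ j = 0 then (F 0).adjoint ∘L F 0 else 0)) (x : H) :
    tailCLM (TF (singCLM x)) ∈ (LinearMap.range (TF : lp (fun _ : ℕ => H) 2 →ₗ[ℂ] lp (fun _ : ℕ => K) 2)).topologicalClosure := by
  classical
  set M := (LinearMap.range (TF : lp (fun _ : ℕ => H) 2 →ₗ[ℂ] lp (fun _ : ℕ => K) 2)).topologicalClosure with hMdef
  haveI : CompleteSpace M :=
    (Submodule.isClosed_topologicalClosure _).completeSpace_coe
  set u := tailCLM (TF (singCLM x)) with hu
  by_contra hmem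
  set p := u - (Submodule.orthogonalProjectionOnto M u : lp (fun _ : ℕ => K) 2) with hp
  have hpM : p ∈ Mᗮ := Submodule.sub_starProjection_mem_orthogonal (K := M) u
  have hp0 : p ≠ 0 := by
    intro h
    apply hmem
    have h2 : u = (Submodule.orthogonalProjectionOnto M u : lp (fun _ : ℕ => K) 2) := by
      rwa [sub_eq_zero] at h
    rw [h2]
    exact (Submodule.orthogonalProjectionOnto M u).2
  have hpn : (0:ℝ) < ‖p‖ := norm_pos_iff.2 hp0
  set c : ℝ := (‖p‖^2)⁻¹ with hc
  have hc0 : 0 < c := by positivity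
  set φ : H →L[ℂ] ℂ := innerSL ℂ p ∘L (tailCLM ∘L (TF ∘L singCLM)) with hφ
  have hφ_apply : ∀ w : H, φ w = ⟪p, tailCLM (TF (singCLM w))⟫_ℂ := fun w => rfl
  set A : H →L[ℂ] H := (F 0).adjoint ∘L F 0 + (c:ℂ) • (φ.adjoint ∘L φ) with hA
  set X : ℕ → ℕ → H →L[ℂ] H := fun i j => if i = 0 ∧ j = 0 then A else 0 with hX
  have e0 : X 0 0 = A := by
    rw [hX]; exact if_pos ⟨rfl, rfl⟩
  have hXqf : ∀ w : H, (⟪X 0 0 w, w⟫_ℂ).re = ‖F 0 w‖^2 + c * ‖φ w‖^2 := by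
    intro w
    rw [e0, hA]
    rw [add_apply, inner_add_left, smul_apply, inner_smul_left]
    rw [comp_apply, comp_apply, adjoint_inner_left, adjoint_inner_left]
    rw [inner_self_eq_norm_sq_to_K, inner_self_eq_norm_sq_to_K]
    simp [Complex.conj_ofReal, ← Complex.ofReal_pow]
  have hsupp : ∀ i j, 0 < i ∨ 0 < j → X i j = 0 := by
    intro i j hij
    have hne : ¬ (i = 0 ∧ j = 0) := by omega
    rw [hX]
    exact if_neg hne
  have hadj : ∀ i j, (X i j).adjoint = X j i := by
    intro i j
    by_cases hij : i = 0 ∧ j = 0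
    · obtain ⟨rfl, rfl⟩ := hij
      rw [e0, hA, map_add]
      congr 1
      · rw [adjoint_comp, adjoint_adjoint]
      · rw [LinearIsometryEquiv.map_smulₛₗ]
        rw [adjoint_comp, adjoint_adjoint]
        simp [Complex.conj_ofReal]
    · have hij' : ¬ (j = 0 ∧ i = 0) := fun h => hij ⟨h.2, h.1⟩
      have h1 : X i j = 0 := by rw [hX]; exact if_neg hij
      have h2 : X j i = 0 := by rw [hX]; exact if_neg hij'
      rw [h1, h2]; simp
  have hpos : ∀ v : ℕ → H, 0 ≤ schurQF 0 X v := by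
    intro v
    rw [schurQF_zero, hXqf]
    positivity
  have hle : ∀ v : lp (fun _ : ℕ => H) 2, schurQF 0 X (fun n => v n) ≤ ‖TF v‖ ^ 2 := by
    intro v
    rw [schurQF_zero, hXqf]
    rw [TF_decomp hTF v, norm_sq_sing_add_shift]
    set w' := tailCLM (TF (singCLM ((v : ℕ → H) 0))) + TF (tailCLM v) with hw'
    have hTtail : TF (tailCLM v) ∈ M :=
      Submodule.le_topologicalClosure _ (LinearMap.mem_range_self _ _)
    have hφv : φ ((v : ℕ → H) 0) = ⟪p, w'⟫_ℂ := by
      rw [hφ_apply, hw', inner_add_right,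
        Submodule.inner_left_of_mem_orthogonal hTtail hpM, add_zero]
    have hcs : ‖φ ((v : ℕ → H) 0)‖ ≤ ‖p‖ * ‖w'‖ := by
      rw [hφv]; exact norm_inner_le_norm p w'
    have h2 : c * ‖φ ((v : ℕ → H) 0)‖^2 ≤ ‖w'‖^2 := by
      have : ‖φ ((v : ℕ → H) 0)‖^2 ≤ ‖p‖^2 * ‖w'‖^2 := by
        nlinarith [norm_nonneg (φ ((v : ℕ → H) 0)), norm_nonneg w', norm_nonneg p]
      calc c * ‖φ ((v : ℕ → H) 0)‖^2 ≤ c * (‖p‖^2 * ‖w'‖^2) := by nlinarith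
        _ = ‖w'‖^2 := by rw [hc, ← mul_assoc, inv_mul_cancel₀ (pow_ne_zero 2 hpn.ne'), one_mul]
    linarith
  obtain ⟨h1, h2, h3, h4, h5⟩ := houter
  have hmax := h5 X hsupp hadj hpos hle (fun _ => x)
  rw [schurQF_zero, schurQF_zero, hXqf] at hmax
  have hSx : (⟪(if (0:ℕ) = 0 ∧ (0:ℕ) = 0 then (F 0).adjoint ∘L F 0 else 0) x, x⟫_ℂ).re
      = ‖F 0 x‖^2 := by
    rw [if_pos ⟨rfl, rfl⟩, comp_apply, adjoint_inner_left, inner_self_eq_norm_sq_to_K]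
    simp [← Complex.ofReal_pow]
  rw [hSx] at hmax
  have hφx0 : φ x = 0 := by
    have : c * ‖φ x‖^2 ≤ 0 := by linarith
    have : ‖φ x‖^2 ≤ 0 := by nlinarith
    have : ‖φ x‖ = 0 := by nlinarith [norm_nonneg (φ x)]
    exact norm_eq_zero.1 this
  have hφx : φ x = (‖p‖:ℂ)^2 := by
    have hud : u = p + (Submodule.orthogonalProjectionOnto M u : lp (fun _ : ℕ => K) 2) := by
      rw [hp]; abel
    have e1 : φ x = ⟪p, u⟫_ℂ := hφ_apply x
    rw [e1]
    conv_lhs => rw [hud]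
    rw [inner_add_right,
      Submodule.inner_left_of_mem_orthogonal (Submodule.orthogonalProjectionOnto M u).2 hpM,
      inner_self_eq_norm_sq_to_K, add_zero]
    norm_cast
  rw [hφx0] at hφx
  have hne : ((‖p‖:ℂ))^2 ≠ 0 :=
    pow_ne_zero _ (Complex.ofReal_ne_zero.mpr (ne_of_gt hpn))
  exact hne hφx.symm


lemma tail_mem (hTF : IsToeplitzOf F TF)
    (houter : IsSchurOfTT TF 0
      (fun i j => if i = 0 ∧ j = 0 then (F 0).adjoint ∘L F 0 else 0))
    {w : lp (fun _ : ℕ => K) 2} (hw : w ∈ (LinearMap.range (TF : lp (fun _ : ℕ => H) 2 →ₗ[ℂ] lp (fun _ : ℕ => K) 2)).topologicalClosure) :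
    tailCLM w ∈ (LinearMap.range (TF : lp (fun _ : ℕ => H) 2 →ₗ[ℂ] lp (fun _ : ℕ => K) 2)).topologicalClosure := by
  set M := (LinearMap.range (TF : lp (fun _ : ℕ => H) 2 →ₗ[ℂ] lp (fun _ : ℕ => K) 2)).topologicalClosure with hM
  have hw' : w ∈ closure ((LinearMap.range (TF : lp (fun _ : ℕ => H) 2 →ₗ[ℂ] lp (fun _ : ℕ => K) 2) : Submodule ℂ _) :
      Set (lp (fun _ : ℕ => K) 2)) := by
    rw [← Submodule.topologicalClosure_coe]; exact hw
  obtain ⟨s, hs, hlim⟩ := mem_closure_iff_seq_limit.1 hw'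
  have hmem : ∀ n, tailCLM (s n) ∈ M := by
    intro n
    obtain ⟨v, hv⟩ := LinearMap.mem_range.1 (hs n)
    rw [ContinuousLinearMap.coe_coe] at hv
    rw [← hv, tail_TF hTF v]
    exact Submodule.add_mem _ (stepA hTF houter _)
      (Submodule.le_topologicalClosure _ (LinearMap.mem_range_self _ _))
  have hcl : IsClosed (M : Set (lp (fun _ : ℕ => K) 2)) :=
    Submodule.isClosed_topologicalClosure _
  have hlim2 : Filter.Tendsto (fun n => tailCLM (s n)) Filter.atTop (nhds (tailCLM w)) :=
    (tailCLM.continuous.tendsto w).comp hlim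
  exact hcl.mem_of_tendsto hlim2 (Filter.Eventually.of_forall hmem)

/-- Pointwise maximality of the outer factor in the disk: if `F` is outer and
`F*F = G*G` on the circle (equivalently `T_F* T_F = T_G* T_G`), then
`G(z)* G(z) ≤ F(z)* F(z)` for every `z` in the open unit disk. -/
theorem outer_pointwise_maximal (F : ℕ → H →L[ℂ] K) (G : ℕ → H →L[ℂ] L)
    (TF : lp (fun _ : ℕ => H) 2 →L[ℂ] lp (fun _ : ℕ => K) 2)
    (TG : lp (fun _ : ℕ => H) 2 →L[ℂ] lp (fun _ : ℕ => L) 2)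
    (hTF : IsToeplitzOf F TF) (hTG : IsToeplitzOf G TG)
    (houter : IsSchurOfTT TF 0
      (fun i j => if i = 0 ∧ j = 0 then (F 0).adjoint ∘L F 0 else 0))
    (heq : TF.adjoint ∘L TF = TG.adjoint ∘L TG) :
    ∀ z : ℂ, ‖z‖ < 1 → ∀ x : H,
      ‖(∑' j : ℕ, z ^ j • G j) x‖ ≤ ‖(∑' j : ℕ, z ^ j • F j) x‖ := by
  intro z hz x
  have hInner : ∀ a b : lp (fun _ : ℕ => H) 2, ⟪TF a, TF b⟫_ℂ = ⟪TG a, TG b⟫_ℂ := by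
    intro a b
    have e1 : ⟪TF a, TF b⟫_ℂ = ⟪(TF.adjoint ∘L TF) a, b⟫_ℂ := by
      rw [comp_apply, adjoint_inner_left]
    have e2 : ⟪TG a, TG b⟫_ℂ = ⟪(TG.adjoint ∘L TG) a, b⟫_ℂ := by
      rw [comp_apply, adjoint_inner_left]
    rw [e1, e2, heq]
  have hNorm : ∀ a, ‖TF a‖ = ‖TG a‖ := by
    intro a
    have h := hInner a a
    rw [inner_self_eq_norm_sq_to_K, inner_self_eq_norm_sq_to_K] at h
    have h2 : ‖TF a‖^2 = ‖TG a‖^2 := by exact_mod_cast h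
    exact norm_eq_of_sq_eq (norm_nonneg _) (norm_nonneg _) h2
  suffices hkey : ∀ y : L, ‖⟪y, (∑' j : ℕ, z ^ j • G j) x⟫_ℂ‖ ≤
      ‖y‖ * ‖(∑' j : ℕ, z ^ j • F j) x‖ by
    have h := hkey ((∑' j : ℕ, z ^ j • G j) x)
    have e : ‖⟪(∑' j : ℕ, z ^ j • G j) x, (∑' j : ℕ, z ^ j • G j) x⟫_ℂ‖
        = ‖(∑' j : ℕ, z ^ j • G j) x‖^2 := by
      rw [← inner_self_re_eq_norm, inner_self_eq_norm_sq]
    rw [e] at h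
    set a := ‖(∑' j : ℕ, z ^ j • G j) x‖ with hadef
    set b := ‖(∑' j : ℕ, z ^ j • F j) x‖ with hbdef
    have ha : (0:ℝ) ≤ a := norm_nonneg _
    have hb : (0:ℝ) ≤ b := norm_nonneg _
    rcases eq_or_lt_of_le ha with ha0 | ha0
    · rw [← ha0]; exact hb
    · nlinarith
  intro y
  -- construct the vector u ∈ M_F representing the G-side kernel functional
  set MG := (LinearMap.range (TG : lp (fun _ : ℕ => H) 2 →ₗ[ℂ] lp (fun _ : ℕ => L) 2)).topologicalClosure with hMG
  haveI : CompleteSpace MG := (Submodule.isClosed_topologicalClosure _).completeSpace_coe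
  set ky := kern z hz y with hky
  set q : lp (fun _ : ℕ => L) 2 := (Submodule.orthogonalProjectionOnto MG ky : lp (fun _ : ℕ => L) 2) with hq
  have hqM : q ∈ MG := (Submodule.orthogonalProjectionOnto MG ky).2
  have hq' : q ∈ closure ((LinearMap.range (TG : lp (fun _ : ℕ => H) 2 →ₗ[ℂ] lp (fun _ : ℕ => L) 2) : Submodule ℂ _) :
      Set (lp (fun _ : ℕ => L) 2)) := by
    rw [← Submodule.topologicalClosure_coe]; exact hqM
  obtain ⟨s, hs, hlim⟩ := mem_closure_iff_seq_limit.1 hq'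
  choose v hv using fun n => LinearMap.mem_range.1 (hs n)
  simp only [ContinuousLinearMap.coe_coe] at hv
  have hcauG : CauchySeq s := hlim.cauchySeq
  have hcauF : CauchySeq (fun n => TF (v n)) := by
    rw [Metric.cauchySeq_iff] at hcauG ⊢
    intro ε hε
    obtain ⟨N, hN⟩ := hcauG ε hε
    refine ⟨N, fun m hm n hn => ?_⟩
    have h := hN m hm n hn
    rw [dist_eq_norm] at h ⊢
    calc ‖TF (v m) - TF (v n)‖ = ‖TF (v m - v n)‖ := by rw [map_sub]
      _ = ‖TG (v m - v n)‖ := hNorm _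
      _ = ‖TG (v m) - TG (v n)‖ := by rw [map_sub]
      _ = ‖s m - s n‖ := by rw [hv m, hv n]
      _ < ε := h
  obtain ⟨u, hu⟩ := cauchySeq_tendsto_of_complete hcauF
  set MF := (LinearMap.range (TF : lp (fun _ : ℕ => H) 2 →ₗ[ℂ] lp (fun _ : ℕ => K) 2)).topologicalClosure with hMF
  have hclF : IsClosed (MF : Set (lp (fun _ : ℕ => K) 2)) :=
    Submodule.isClosed_topologicalClosure _
  have P1 : u ∈ MF := by
    refine hclF.mem_of_tendsto hu (Filter.Eventually.of_forall fun n => ?_)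
    exact Submodule.le_topologicalClosure _ (LinearMap.mem_range_self _ _)
  have P2 : ∀ w : lp (fun _ : ℕ => H) 2, ⟪u, TF w⟫_ℂ = ⟪ky, TG w⟫_ℂ := by
    intro w
    have t1 : Filter.Tendsto (fun n => ⟪TF (v n), TF w⟫_ℂ) Filter.atTop
        (nhds ⟪u, TF w⟫_ℂ) := hu.inner tendsto_const_nhds
    have t2 : Filter.Tendsto (fun n => ⟪s n, TG w⟫_ℂ) Filter.atTop
        (nhds ⟪q, TG w⟫_ℂ) := hlim.inner tendsto_const_nhds
    have he : (fun n => ⟪TF (v n), TF w⟫_ℂ) = fun n => ⟪s n, TG w⟫_ℂ := by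
      funext n; rw [hInner, hv]
    rw [he] at t1
    have hqq : ⟪u, TF w⟫_ℂ = ⟪q, TG w⟫_ℂ := tendsto_nhds_unique t1 t2
    have horth : ⟪ky - q, TG w⟫_ℂ = 0 :=
      Submodule.inner_left_of_mem_orthogonal
        (Submodule.le_topologicalClosure _ (LinearMap.mem_range_self _ _))
        (Submodule.sub_starProjection_mem_orthogonal (K := MG) ky)
    rw [inner_sub_left, sub_eq_zero] at horth
    rw [hqq, ← horth]
  have P3 : ‖u‖ ≤ ‖ky‖ := by
    have t1 : Filter.Tendsto (fun n => ‖TF (v n)‖) Filter.atTop (nhds ‖u‖) := hu.norm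
    have t2 : Filter.Tendsto (fun n => ‖s n‖) Filter.atTop (nhds ‖q‖) := hlim.norm
    have he : (fun n => ‖TF (v n)‖) = fun n => ‖s n‖ := by
      funext n; rw [hNorm, hv]
    rw [he] at t1
    have huq : ‖u‖ = ‖q‖ := tendsto_nhds_unique t1 t2
    rw [huq]
    have h1 := (Submodule.orthogonalProjectionOnto MG).le_opNorm ky
    have h2 := Submodule.orthogonalProjectionOnto_norm_le MG
    have h3 : ‖q‖ = ‖Submodule.orthogonalProjectionOnto MG ky‖ := rfl
    nlinarith [norm_nonneg ky]
  have hSstar : tailCLM u = (star z) • u := by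
    set w := tailCLM u - (star z) • u with hwdef
    have hwM : w ∈ MF :=
      Submodule.sub_mem _ (tail_mem hTF houter P1) (Submodule.smul_mem _ _ P1)
    have horth : ∀ a : lp (fun _ : ℕ => H) 2, ⟪w, TF a⟫_ℂ = 0 := by
      intro a
      rw [hwdef, inner_sub_left]
      have e1 : ⟪tailCLM u, TF a⟫_ℂ = ⟪u, TF (shiftCLM a)⟫_ℂ := by
        rw [inner_tail_left, TF_shift hTF]
      have e2 : ⟪ky, TG (shiftCLM a)⟫_ℂ = z * ⟪ky, TG a⟫_ℂ := by
        rw [TF_shift hTG, ← inner_tail_left, hky, tail_kern, inner_smul_left]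
        simp
      rw [e1, P2, e2, inner_smul_left, P2]
      simp
    have hw0 : w = 0 := by
      have hw' : w ∈ closure ((LinearMap.range (TF : lp (fun _ : ℕ => H) 2 →ₗ[ℂ] lp (fun _ : ℕ => K) 2) : Submodule ℂ _) :
          Set (lp (fun _ : ℕ => K) 2)) := by
        rw [← Submodule.topologicalClosure_coe]; exact hwM
      obtain ⟨t, ht, htlim⟩ := mem_closure_iff_seq_limit.1 hw'
      choose a ha using fun n => LinearMap.mem_range.1 (ht n)
      have t1 : Filter.Tendsto (fun n => ⟪w, t n⟫_ℂ) Filter.atTop (nhds ⟪w, w⟫_ℂ) :=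
        tendsto_const_nhds.inner htlim
      have he : (fun n => ⟪w, t n⟫_ℂ) = fun _ => (0:ℂ) := by
        funext n; rw [← ha n]; exact horth (a n)
      rw [he] at t1
      have : ⟪w, w⟫_ℂ = 0 := tendsto_nhds_unique t1 tendsto_const_nhds
      exact inner_self_eq_zero.1 this
    have := sub_eq_zero.1 (hwdef ▸ hw0)
    exact this
  have hcomp : ∀ n : ℕ, (u : ℕ → K) n = (star z)^n • (u : ℕ → K) 0 := by
    intro n
    induction n with
    | zero => simp
    | succ n ih =>
      have e1 : (u : ℕ → K) (n+1) = (tailCLM u : ℕ → K) n := (tailCLM_apply u n).symm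
      rw [e1, hSstar, lp.coeFn_smul, Pi.smul_apply, ih, smul_smul, ← pow_succ']
  have hueq : u = kern z hz ((u : ℕ → K) 0) := by
    apply lp.ext; funext n
    rw [hcomp n]; rfl
  have hnu : ‖(u : ℕ → K) 0‖ ≤ ‖y‖ := by
    have h1 : ‖u‖^2 = (∑' n : ℕ, (‖z‖^2)^n) * ‖(u : ℕ → K) 0‖^2 := by
      conv_lhs => rw [hueq]
      exact norm_sq_kern z hz _
    have h2 : ‖ky‖^2 = (∑' n : ℕ, (‖z‖^2)^n) * ‖y‖^2 := norm_sq_kern z hz y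
    have hsum : Summable fun n : ℕ => (‖z‖^2)^n :=
      summable_geometric_of_lt_one (by positivity) (by nlinarith [norm_nonneg z])
    have hs1 : (1:ℝ) ≤ ∑' n : ℕ, (‖z‖^2)^n := by
      have := Summable.le_tsum hsum 0 (fun i _ => by positivity)
      simpa using this
    have hP3sq : ‖u‖^2 ≤ ‖ky‖^2 := by nlinarith [norm_nonneg u, norm_nonneg ky]
    have hs0 : (0:ℝ) < ∑' n : ℕ, (‖z‖^2)^n := lt_of_lt_of_le one_pos hs1
    have h4 : (∑' n : ℕ, (‖z‖^2)^n) * ‖(u : ℕ → K) 0‖^2 ≤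
        (∑' n : ℕ, (‖z‖^2)^n) * ‖y‖^2 := by
      rw [← h1, ← h2]; exact hP3sq
    have h5 : ‖(u : ℕ → K) 0‖^2 ≤ ‖y‖^2 := le_of_mul_le_mul_left h4 hs0
    nlinarith [norm_nonneg ((u : ℕ → K) 0), norm_nonneg y]
  have hfin : ⟪y, (∑' j : ℕ, z ^ j • G j) x⟫_ℂ =
      ⟪(u : ℕ → K) 0, (∑' j : ℕ, z ^ j • F j) x⟫_ℂ := by
    rw [← eval_kern hTG hz x y, ← eval_kern hTF hz x ((u : ℕ → K) 0)]
    rw [← hky, ← hueq]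
    exact (P2 (singCLM x)).symm
  calc ‖⟪y, (∑' j : ℕ, z ^ j • G j) x⟫_ℂ‖
      = ‖⟪(u : ℕ → K) 0, (∑' j : ℕ, z ^ j • F j) x⟫_ℂ‖ := by rw [hfin]
    _ ≤ ‖(u : ℕ → K) 0‖ * ‖(∑' j : ℕ, z ^ j • F j) x‖ := norm_inner_le_norm _ _
    _ ≤ ‖y‖ * ‖(∑' j : ℕ, z ^ j • F j) x‖ :=
        mul_le_mul_of_nonneg_right hnu (norm_nonneg _)

end
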